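/- Let p be an odd prime and let q, q' be integers prime to p. Let s and s' be the multiplicative orders of q and q' modulo p. Then the closures of the subgroups generated by q and by q' in ℤ_p^× coincide if and only if s = s' and v_p(q^s − 1) = v_p(q'^{s'} − 1), where v_p denotes the p-adic valuation. -/

import Mathlib

open PadicInt Subgroup

variable {p : ℕ} [hp : Fact p.Prime]

private lemma aux_pow_ne_one (hodd : Odd p) {a : ℤ} (ha : a ≠ 1) (hpa : (p:ℤ) ∣ a - 1)
    {t : ℕ} (ht : t ≠ 0) : a ^ t ≠ 1 := by
  have hp2 : p ≠ 2 := by rintro rfl; exact (Nat.not_odd_iff_even.mpr even_two) hodd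
  have hp3 : 3 ≤ p := by have := hp.out.two_le; omega
  have ha0 : a ≠ 0 := by
    rintro rfl
    rw [zero_sub] at hpa
    have := Int.le_of_dvd one_pos (dvd_neg.mp hpa)
    omega
  have ham : a ≠ -1 := by
    rintro rfl
    have : (p:ℤ) ∣ 2 := by simpa using hpa.neg_right
    have := Int.le_of_dvd (by norm_num) this
    omega
  have h2 : 1 < |a| := by rcases abs_cases a with ⟨h,_⟩|⟨h,_⟩ <;> omega
  intro hco
  have h3 : |a ^ t| = 1 := by rw [hco, abs_one]
  rw [abs_pow] at h3
  have h4 : 1 < |a| ^ t := one_lt_pow₀ h2 ht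
  omega

private lemma emult_eq_padicValInt {z : ℤ} (hz : z ≠ 0) :
    emultiplicity (p : ℤ) z = padicValInt p z := by
  rw [← Int.emultiplicity_natAbs, padicValInt,
    padicValNat_eq_emultiplicity (Int.natAbs_ne_zero.mpr hz)]

private lemma lte_val (hodd : Odd p) {a : ℤ} (h1 : (p:ℤ) ∣ a - 1) (h2 : ¬ (p:ℤ) ∣ a)
    (ha : a ≠ 1) {t : ℕ} (ht : t ≠ 0) :
    padicValInt p (a ^ t - 1) = padicValInt p (a - 1) + padicValNat p t := by
  have e1 : a - 1 ≠ 0 := sub_ne_zero.mpr ha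
  have e2 : a ^ t - 1 ≠ 0 := sub_ne_zero.mpr (aux_pow_ne_one hodd ha h1 ht)
  have key := Int.emultiplicity_pow_sub_pow hp.out hodd (x := a) (y := 1) (by simpa using h1)
    h2 t
  rw [one_pow, emult_eq_padicValInt e2, emult_eq_padicValInt e1,
    ← padicValNat_eq_emultiplicity ht] at key
  exact_mod_cast key

private lemma isUnit_intCast {q : ℤ} {m : ℕ} (h : IsCoprime q (m:ℤ)) : IsUnit (q : ZMod m) := by
  obtain ⟨x, y, hxy⟩ := h
  refine IsUnit.of_mul_eq_one (x : ZMod m) ?_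
  have := congrArg (Int.cast : ℤ → ZMod m) hxy
  push_cast at this
  rw [ZMod.natCast_self] at this
  linear_combination this

private lemma cast_pow_eq_one_iff (m : ℕ) (q : ℤ) (t : ℕ) :
    ((q : ZMod m))^t = 1 ↔ (m:ℤ) ∣ q^t - 1 := by
  rw [← sub_eq_zero]
  have : ((q:ZMod m))^t - 1 = ((q^t - 1 : ℤ) : ZMod m) := by push_cast; ring
  rw [this, ZMod.intCast_zmod_eq_zero_iff_dvd]

private lemma s_dvd_iff {q : ℤ} (t : ℕ) :
    orderOf ((q : ZMod p)) ∣ t ↔ (p:ℤ) ∣ q^t - 1 := by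
  rw [← cast_pow_eq_one_iff, orderOf_dvd_iff_pow_eq_one]

private lemma s_pos {q : ℤ} (hq : IsCoprime q (p:ℤ)) : 0 < orderOf ((q : ZMod p)) := by
  obtain ⟨v, hv⟩ := isUnit_intCast hq
  rw [← hv, orderOf_units]
  exact orderOf_pos v

private lemma not_p_dvd {q : ℤ} (hq : IsCoprime q (p:ℤ)) : ¬ (p:ℤ) ∣ q := by
  intro h
  have := IsCoprime.isUnit_of_dvd' hq h dvd_rfl
  rw [Int.isUnit_iff] at this
  have := hp.out.two_le
  omega

-- powers of p^n cast
private lemma cast_pow_pn (n : ℕ) (q : ℤ) (t : ℕ) :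
    ((q : ZMod (p^n)))^t = 1 ↔ (p:ℤ)^n ∣ q^t - 1 := by
  rw [cast_pow_eq_one_iff]; push_cast; rfl

private lemma order_cast_pow (hodd : Odd p) {q : ℤ} (hq : IsCoprime q (p:ℤ)) (n : ℕ) (hn : n ≠ 0) :
    orderOf ((q : ZMod (p^n))) =
      if q ^ (orderOf ((q : ZMod p))) = 1 then orderOf ((q : ZMod p))
      else orderOf ((q : ZMod p)) * p ^ (n - padicValInt p (q ^ (orderOf ((q : ZMod p))) - 1)) := by
  set s := orderOf ((q : ZMod p)) with hs
  have hspos : 0 < s := s_pos hq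
  have hps : (p:ℤ) ∣ q ^ s - 1 := (s_dvd_iff s).mp dvd_rfl
  have hppow : ¬ (p:ℤ) ∣ q ^ s := fun h => not_p_dvd hq ((Nat.prime_iff_prime_int.mp hp.out).dvd_of_dvd_pow h)
  -- positivity of the order mod p^n
  have hordpos : 0 < orderOf ((q : ZMod (p^n))) := by
    haveI : NeZero (p^n) := ⟨pow_ne_zero n hp.out.ne_zero⟩
    have hcop : IsCoprime q ((p^n : ℕ) : ℤ) := by push_cast; exact hq.pow_right
    obtain ⟨v, hv⟩ := isUnit_intCast hcop
    rw [← hv, orderOf_units]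
    exact orderOf_pos v
  -- s divides the order mod p^n
  have hsdvd : s ∣ orderOf ((q : ZMod (p^n))) := by
    rw [s_dvd_iff]
    have := (cast_pow_pn n q _).mp (pow_orderOf_eq_one ((q : ZMod (p^n))))
    exact dvd_trans (by simpa using dvd_pow_self (p:ℤ) hn) this
  by_cases htor : q ^ s = 1
  · rw [if_pos htor]
    refine Nat.dvd_antisymm ?_ hsdvd
    rw [orderOf_dvd_iff_pow_eq_one, cast_pow_pn, htor, sub_self]
    exact dvd_zero _
  · rw [if_neg htor]
    set k := padicValInt p (q ^ s - 1) with hk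
    have hqs0 : q ^ s - 1 ≠ 0 := sub_ne_zero.mpr htor
    have hk1 : 1 ≤ k := by
      have := (padicValInt_dvd_iff 1 (q^s - 1)).mp (by simpa using hps)
      tauto
    -- key valuation formula
    have hval : ∀ t : ℕ, t ≠ 0 → padicValInt p (q ^ (s * t) - 1) = k + padicValNat p t := by
      intro t ht
      rw [pow_mul]
      exact lte_val hodd hps hppow htor ht
    apply Nat.dvd_antisymm
    · -- order divides s * p^(n-k)
      rw [orderOf_dvd_iff_pow_eq_one, cast_pow_pn, padicValInt_dvd_iff]
      right
      rw [hval _ (pow_ne_zero _ hp.out.ne_zero), padicValNat.prime_pow]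
      omega
    · -- s * p^(n-k) divides order
      obtain ⟨t₂, ht₂⟩ := hsdvd
      have ht₂0 : t₂ ≠ 0 := by rintro rfl; simp only [mul_zero] at ht₂; omega
      have h1 : (p:ℤ)^n ∣ q ^ (orderOf ((q : ZMod (p^n)))) - 1 :=
        (cast_pow_pn n q _).mp (pow_orderOf_eq_one _)
      rw [ht₂] at h1
      have h2 : q ^ (s * t₂) - 1 ≠ 0 :=
        sub_ne_zero.mpr (by rw [pow_mul]; exact aux_pow_ne_one hodd htor hps ht₂0)
      have h3 : n ≤ k + padicValNat p t₂ := by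
        have := (padicValInt_dvd_iff n _).mp h1
        rw [hval t₂ ht₂0] at this
        tauto
      have h4 : p ^ (n - k) ∣ t₂ :=
        dvd_trans (pow_dvd_pow p (by omega)) pow_padicValNat_dvd
      rw [ht₂]
      exact mul_dvd_mul_left s h4
private lemma cyclic_units (hodd : Odd p) (n : ℕ) : IsCyclic (ZMod (p^n))ˣ := by
  have hp2 : 2 ≤ p := hp.out.two_le
  rcases Nat.eq_zero_or_pos n with rfl | hn
  · haveI : NeZero (p^0) := ⟨one_ne_zero⟩
    have hcard : Fintype.card (ZMod (p^0))ˣ = 1 := by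
      rw [ZMod.card_units_eq_totient, pow_zero, Nat.totient_one]
    haveI := Fintype.card_le_one_iff_subsingleton.mp hcard.le
    exact isCyclic_of_subsingleton
  haveI : NeZero (p^n) := ⟨pow_ne_zero n hp.out.ne_zero⟩
  have hn' : n ≠ 0 := hn.ne'
  have hcard : Nat.card (ZMod (p^n))ˣ = p^(n-1) * (p-1) := by
    rw [Nat.card_eq_fintype_card, ZMod.card_units_eq_totient,
      Nat.totient_prime_pow hp.out hn]
  -- the element A of order p^(n-1)
  have hAco : Nat.Coprime (1+p) (p^n) :=
    Nat.Coprime.pow_right n (by simpa using Nat.coprime_one_left p)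
  set A : (ZMod (p^n))ˣ := ZMod.unitOfCoprime (1+p) hAco with hA
  have hAval : (A : ZMod (p^n)) = ((1+p : ℤ) : ZMod (p^n)) := by
    show ((1+p : ℕ) : ZMod (p^n)) = _
    push_cast; ring
  have hApow : ∀ t : ℕ, A ^ t = 1 ↔ (p:ℤ)^n ∣ (1+p:ℤ)^t - 1 := by
    intro t
    rw [← cast_pow_pn n (1+p) t, ← hAval]
    constructor
    · intro h; have := congrArg (Units.val) h; push_cast at this ⊢; exact this
    · intro h; ext; push_cast at this ⊢; exact h
  have hple : ¬ (p:ℤ) ∣ (1+p:ℤ) := by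
    intro h
    have : (p:ℤ) ∣ 1 := by simpa using (dvd_sub h (dvd_refl (p:ℤ)))
    have := Int.le_of_dvd one_pos this
    omega
  have hlte : ∀ t : ℕ, t ≠ 0 → padicValInt p ((1+p:ℤ)^t - 1) = 1 + padicValNat p t := by
    intro t ht
    rw [lte_val hodd (by ring_nf; exact dvd_refl _) hple (by omega) ht]
    congr 1
    have : (1+p : ℤ) - 1 = (p:ℤ) := by ring
    rw [this]
    exact padicValInt.self (by omega)
  have hane : ∀ t : ℕ, t ≠ 0 → (1+p:ℤ)^t - 1 ≠ 0 := fun t ht =>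
    sub_ne_zero.mpr (aux_pow_ne_one hodd (by omega) (by ring_nf; exact dvd_refl _) ht)
  have hOA : orderOf A = p^(n-1) := by
    have h1 : A ^ (p^(n-1)) = 1 := by
      rw [hApow, padicValInt_dvd_iff]
      right
      rw [hlte _ (pow_ne_zero _ (by omega)), padicValNat.prime_pow]
      omega
    have h2 := orderOf_dvd_of_pow_eq_one h1
    obtain ⟨j, hj, he⟩ := (Nat.dvd_prime_pow hp.out).mp h2
    rw [he]
    congr 1
    by_contra hne
    have hjlt : j < n - 1 := lt_of_le_of_ne hj hne
    have h3 : A ^ (p^j) = 1 := by rw [← he]; exact pow_orderOf_eq_one A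
    rw [hApow, padicValInt_dvd_iff] at h3
    rcases h3 with h3 | h3
    · exact hane _ (pow_ne_zero _ (by omega)) h3
    · rw [hlte _ (pow_ne_zero _ (by omega)), padicValNat.prime_pow] at h3
      omega
  -- the element B of order p-1
  obtain ⟨g, hg⟩ := IsCyclic.exists_generator (α := (ZMod p)ˣ)
  have hOg : orderOf g = p - 1 := by
    rw [orderOf_eq_card_of_forall_mem_zpowers hg, Nat.card_eq_fintype_card, ZMod.card_units]
  set gv : ℕ := ((g : ZMod p)).val with hgv
  have hgvval : ((gv : ℕ) : ZMod p) = (g : ZMod p) := ZMod.natCast_rightInverse _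
  have hgvco : ¬ p ∣ gv := by
    intro h
    have : ((gv : ℕ) : ZMod p) = 0 := (ZMod.natCast_eq_zero_iff _ _).mpr h
    rw [hgvval] at this
    exact g.ne_zero this
  have hBco : Nat.Coprime gv (p^n) :=
    Nat.Coprime.pow_right n (Nat.coprime_comm.mp (hp.out.coprime_iff_not_dvd.mpr hgvco))
  set B0 : (ZMod (p^n))ˣ := ZMod.unitOfCoprime gv hBco with hB0
  set π : (ZMod (p^n))ˣ →* (ZMod p)ˣ :=
    Units.map (ZMod.castHom (dvd_pow_self p hn') (ZMod p)).toMonoidHom with hπ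
  have hπB0 : π B0 = g := by
    ext
    show (ZMod.castHom (dvd_pow_self p hn') (ZMod p)) ((gv : ZMod (p^n))) = (g : ZMod p)
    rw [map_natCast, hgvval]
  set B : (ZMod (p^n))ˣ := B0 ^ (p^(n-1)) with hB
  have hOB : orderOf B = p - 1 := by
    have hco : Nat.Coprime (p-1) p :=
      (Nat.coprime_self_sub_left (by omega)).mpr (Nat.coprime_one_left p)
    apply Nat.dvd_antisymm
    · apply orderOf_dvd_of_pow_eq_one
      rw [hB, ← pow_mul]
      have : p ^ (n-1) * (p-1) = Fintype.card (ZMod (p^n))ˣ := by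
        rw [← Nat.card_eq_fintype_card, hcard]
      rw [this]
      exact pow_card_eq_one
    · have hπB : π B = g ^ (p^(n-1)) := by rw [hB, map_pow, hπB0]
      have h5 : orderOf (π B) = p - 1 := by
        rw [hπB, Nat.Coprime.orderOf_pow (by rw [hOg]; exact hco.pow_right _), hOg]
      calc p - 1 = orderOf (π B) := h5.symm
        _ ∣ orderOf B := orderOf_map_dvd π B
  have hcomm : Commute A B := Commute.all A B
  have hcop : Nat.Coprime (orderOf A) (orderOf B) := by
    rw [hOA, hOB]
    exact Nat.Coprime.pow_left _
      ((Nat.coprime_self_sub_left (by omega)).mpr (Nat.coprime_one_left p)).symm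
  have : orderOf (A * B) = Nat.card (ZMod (p^n))ˣ := by
    rw [Commute.orderOf_mul_eq_mul_orderOf_of_coprime hcomm hcop, hOA, hOB, hcard]
  exact isCyclic_of_orderOf_eq_card (A * B) this
private noncomputable def phi (p : ℕ) [Fact p.Prime] (n : ℕ) : ℤ_[p]ˣ →* (ZMod (p^n))ˣ :=
  Units.map (toZModPow n).toMonoidHom

private lemma toZModPow_eq_iff (n : ℕ) (x y : ℤ_[p]) :
    toZModPow n x = toZModPow n y ↔ ‖x - y‖ ≤ (p:ℝ)^(-(n:ℤ)) := by
  rw [norm_le_pow_iff_mem_span_pow, ← ker_toZModPow, RingHom.mem_ker, map_sub, sub_eq_zero]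

private lemma phi_val (n : ℕ) (x : ℤ_[p]ˣ) :
    ((phi p n x : (ZMod (p^n))ˣ) : ZMod (p^n)) = toZModPow n (x : ℤ_[p]) := rfl

private lemma mem_closure_iff_forall (u x : ℤ_[p]ˣ) :
    x ∈ _root_.closure ((zpowers u : Subgroup ℤ_[p]ˣ) : Set ℤ_[p]ˣ) ↔
      ∀ n, phi p n x ∈ zpowers (phi p n u) := by
  constructor
  · intro hx n
    haveI : NeZero (p^n) := ⟨pow_ne_zero n hp.out.ne_zero⟩
    have hclosed : IsClosed {y : ℤ_[p]ˣ | phi p n y ∈ zpowers (phi p n u)} := by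
      have hU : {y : ℤ_[p]ˣ | phi p n y ∈ zpowers (phi p n u)} =
          ⋃ (c : (ZMod (p^n))ˣ) (_ : c ∈ zpowers (phi p n u)), {y | phi p n y = c} := by
        ext y
        simp only [Set.mem_setOf_eq, Set.mem_iUnion]
        exact ⟨fun h => ⟨phi p n y, h, rfl⟩, fun ⟨c, hc, he⟩ => he ▸ hc⟩
      rw [hU]
      refine isClosed_iUnion_of_finite fun c => isClosed_iUnion_of_finite fun _ => ?_
      by_cases hc : ∃ y0 : ℤ_[p]ˣ, phi p n y0 = c
      · obtain ⟨y0, hy0⟩ := hc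
        have hset : {y : ℤ_[p]ˣ | phi p n y = c} =
            Units.val ⁻¹' Metric.closedBall (y0 : ℤ_[p]) ((p:ℝ)^(-(n:ℤ))) := by
          ext y
          simp only [Set.mem_setOf_eq, Set.mem_preimage, Metric.mem_closedBall, dist_eq_norm]
          rw [← hy0]
          constructor
          · intro h
            exact (toZModPow_eq_iff n _ _).mp (congrArg Units.val h)
          · intro h
            exact Units.ext ((toZModPow_eq_iff n _ _).mpr h)
        rw [hset]
        exact Metric.isClosed_closedBall.preimage Units.continuous_val
      · have : {y : ℤ_[p]ˣ | phi p n y = c} = ∅ := by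
          ext y
          simp only [Set.mem_setOf_eq, Set.mem_empty_iff_false, iff_false]
          exact fun h => hc ⟨y, h⟩
        rw [this]
        exact isClosed_empty
    refine closure_minimal ?_ hclosed hx
    rintro y ⟨m, rfl⟩
    exact ⟨m, (map_zpow (phi p n) u m).symm⟩
  · intro h
    rw [Units.isOpenEmbedding_val.isEmbedding.isInducing.closure_eq_preimage_closure_image,
      Set.mem_preimage, Metric.mem_closure_iff]
    intro ε hε
    obtain ⟨n, hn⟩ : ∃ n : ℕ, (p:ℝ)^(-(n:ℤ)) < ε := by
      have hp1 : (1:ℝ) < p := by exact_mod_cast hp.out.one_lt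
      obtain ⟨n, hn⟩ := exists_pow_lt_of_lt_one hε (by
        rw [inv_lt_one_iff₀]; right; exact hp1 : (p:ℝ)⁻¹ < 1)
      exact ⟨n, by rwa [zpow_neg, zpow_natCast, ← inv_pow]⟩
    obtain ⟨m, hm⟩ := h n
    refine ⟨((u^m : ℤ_[p]ˣ) : ℤ_[p]), ⟨u^m, ⟨m, rfl⟩, rfl⟩, ?_⟩
    rw [dist_eq_norm]
    refine lt_of_le_of_lt ?_ hn
    rw [← toZModPow_eq_iff]
    have : phi p n (u ^ m) = phi p n x := by rw [map_zpow]; exact hm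
    exact (congrArg Units.val this).symm
private lemma mem_zpowers_of_orderOf_dvd {G : Type*} [Group G] [Fintype G] [IsCyclic G]
    (a b : G) (h : orderOf a ∣ orderOf b) : a ∈ zpowers b := by
  classical
  have hle := IsCyclic.card_pow_eq_one_le (α := G) (n := orderOf b) (orderOf_pos b)
  set S : Finset G := {x : G | x ^ orderOf b = 1} with hSdef
  have hsub : ((zpowers b : Subgroup G) : Set G) ⊆ S := by
    rintro x ⟨m, rfl⟩
    simp only [S, Finset.coe_filter, Set.mem_setOf_eq, Finset.mem_coe, Finset.mem_filter,
      Finset.mem_univ, true_and]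
    rw [← zpow_natCast, ← zpow_mul, mul_comm, zpow_mul, zpow_natCast, pow_orderOf_eq_one,
      one_zpow]
  have hS : ((zpowers b : Subgroup G) : Set G) = (S : Set G) := by
    apply Set.eq_of_subset_of_ncard_le hsub
    rw [Set.ncard_coe_finset]
    calc (S.card : ℕ) ≤ orderOf b := hle
      _ = Nat.card (zpowers b) := (Nat.card_zpowers b).symm
      _ = ((zpowers b : Subgroup G) : Set G).ncard := (Nat.card_coe_set_eq _).symm
  have : a ∈ S := by
    simp only [S, Finset.mem_filter, Finset.mem_univ, true_and]
    exact orderOf_dvd_iff_pow_eq_one.mp h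
  rw [← SetLike.mem_coe, hS]
  exact this

private lemma zpowers_eq_iff_orderOf_eq {G : Type*} [Group G] [Fintype G] [IsCyclic G]
    (a b : G) : zpowers a = zpowers b ↔ orderOf a = orderOf b := by
  constructor
  · intro h
    rw [← Nat.card_zpowers a, ← Nat.card_zpowers b, h]
  · intro h
    apply le_antisymm
    · rw [zpowers_le]
      exact mem_zpowers_of_orderOf_dvd a b (h ▸ dvd_rfl)
    · rw [zpowers_le]
      exact mem_zpowers_of_orderOf_dvd b a (h ▸ dvd_rfl)

private lemma closure_eq_iff (u u' : ℤ_[p]ˣ) :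
    (zpowers u).topologicalClosure = (zpowers u').topologicalClosure ↔
      ∀ n, zpowers (phi p n u) = zpowers (phi p n u') := by
  constructor
  · intro h n
    have h1 : u' ∈ _root_.closure ((zpowers u : Subgroup ℤ_[p]ˣ) : Set ℤ_[p]ˣ) := by
      have : u' ∈ (zpowers u').topologicalClosure :=
        Subgroup.le_topologicalClosure _ (mem_zpowers u')
      rw [← h] at this
      exact this
    have h2 : u ∈ _root_.closure ((zpowers u' : Subgroup ℤ_[p]ˣ) : Set ℤ_[p]ˣ) := by
      have : u ∈ (zpowers u).topologicalClosure :=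
        Subgroup.le_topologicalClosure _ (mem_zpowers u)
      rw [h] at this
      exact this
    apply le_antisymm
    · rw [zpowers_le]
      exact (mem_closure_iff_forall u' u).mp h2 n
    · rw [zpowers_le]
      exact (mem_closure_iff_forall u u').mp h1 n
  · intro h
    apply SetLike.ext'
    show _root_.closure ((zpowers u : Subgroup ℤ_[p]ˣ) : Set ℤ_[p]ˣ) =
      _root_.closure ((zpowers u' : Subgroup ℤ_[p]ˣ) : Set ℤ_[p]ˣ)
    ext x
    rw [mem_closure_iff_forall, mem_closure_iff_forall]
    exact forall_congr' fun n => by rw [h n]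
private lemma one_le_k {q : ℤ} (htor : q ^ (orderOf ((q : ZMod p))) ≠ 1) :
    1 ≤ padicValInt p (q ^ (orderOf ((q : ZMod p))) - 1) := by
  have hps : (p:ℤ) ∣ q ^ (orderOf ((q : ZMod p))) - 1 := (s_dvd_iff _).mp dvd_rfl
  have := (padicValInt_dvd_iff 1 (q ^ (orderOf ((q : ZMod p))) - 1)).mp (by simpa using hps)
  rcases this with h | h
  · exact absurd (sub_eq_zero.mp h) htor
  · exact h

private lemma orderOf_phi {q : ℤ} (n : ℕ) (u : ℤ_[p]ˣ) (hu : (u : ℤ_[p]) = (q : ℤ_[p])) :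
    orderOf (phi p n u) = orderOf ((q : ZMod (p^n))) := by
  rw [← orderOf_units]
  congr 1
  show toZModPow n (u : ℤ_[p]) = _
  rw [hu, map_intCast]

/-- For an odd prime `p` and integers `q, q'` prime to `p`, the closed subgroups of
`ℤ_pˣ` generated by `q` and `q'` coincide if and only if `q` and `q'` have the same
multiplicative order `s = s'` modulo `p` and `v_p(q^s - 1) = v_p(q'^{s'} - 1)`. -/
theorem stmt12 (p : ℕ) [Fact p.Prime] (hoddp : Odd p) (q q' : ℤ)
    (hq : IsCoprime q (p : ℤ)) (hq' : IsCoprime q' (p : ℤ))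
    (u u' : ℤ_[p]ˣ) (hu : (u : ℤ_[p]) = (q : ℤ_[p])) (hu' : (u' : ℤ_[p]) = (q' : ℤ_[p])) :
    (Subgroup.zpowers u).topologicalClosure = (Subgroup.zpowers u').topologicalClosure ↔
      (orderOf ((q : ZMod p)) = orderOf ((q' : ZMod p)) ∧
        padicValInt p (q ^ orderOf ((q : ZMod p)) - 1) =
          padicValInt p (q' ^ orderOf ((q' : ZMod p)) - 1)) := by
  have hp2 : 2 ≤ p := ‹Fact p.Prime›.out.two_le
  set s := orderOf ((q : ZMod p)) with hsdef
  set s' := orderOf ((q' : ZMod p)) with hs'def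
  have hspos : 0 < s := s_pos hq
  have hs'pos : 0 < s' := s_pos hq'
  rw [closure_eq_iff u u']
  have key : ∀ n, (zpowers (phi p n u) = zpowers (phi p n u')) ↔
      (orderOf ((q : ZMod (p^n))) = orderOf ((q' : ZMod (p^n)))) := by
    intro n
    haveI : NeZero (p^n) := ⟨pow_ne_zero n ‹Fact p.Prime›.out.ne_zero⟩
    haveI := cyclic_units (p := p) hoddp n
    rw [zpowers_eq_iff_orderOf_eq, orderOf_phi n u hu, orderOf_phi n u' hu']
  rw [forall_congr' key]
  have F : ∀ n, n ≠ 0 → orderOf ((q : ZMod (p^n))) =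
      if q ^ s = 1 then s else s * p ^ (n - padicValInt p (q ^ s - 1)) :=
    fun n hn => order_cast_pow hoddp hq n hn
  have F' : ∀ n, n ≠ 0 → orderOf ((q' : ZMod (p^n))) =
      if q' ^ s' = 1 then s' else s' * p ^ (n - padicValInt p (q' ^ s' - 1)) :=
    fun n hn => order_cast_pow hoddp hq' n hn
  constructor
  · intro h
    by_cases t1 : q ^ s = 1 <;> by_cases t2 : q' ^ s' = 1
    · -- both torsion
      have h1 := h 1
      rw [F 1 one_ne_zero, F' 1 one_ne_zero, if_pos t1, if_pos t2] at h1
      exact ⟨h1, by rw [t1, t2]⟩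
    · -- q torsion, q' not : contradiction via n = k' + 1 after getting s = s'
      exfalso
      have hk'1 := one_le_k (p := p) t2
      rw [← hs'def] at hk'1
      have h1 := h 1
      rw [F 1 one_ne_zero, F' 1 one_ne_zero, if_pos t1, if_neg t2,
        Nat.sub_eq_zero_of_le hk'1, pow_zero, mul_one] at h1
      have h2 := h (padicValInt p (q' ^ s' - 1) + 1)
      rw [F _ (Nat.succ_ne_zero _), F' _ (Nat.succ_ne_zero _), if_pos t1, if_neg t2] at h2
      have he : (padicValInt p (q' ^ s' - 1) + 1) - padicValInt p (q' ^ s' - 1) = 1 := by omega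
      rw [he, pow_one] at h2
      nlinarith [h1, h2, hs'pos, hp2]
    · exfalso
      have hk1 := one_le_k (p := p) t1
      rw [← hsdef] at hk1
      have h1 := h 1
      rw [F 1 one_ne_zero, F' 1 one_ne_zero, if_neg t1, if_pos t2,
        Nat.sub_eq_zero_of_le hk1, pow_zero, mul_one] at h1
      have h2 := h (padicValInt p (q ^ s - 1) + 1)
      rw [F _ (Nat.succ_ne_zero _), F' _ (Nat.succ_ne_zero _), if_neg t1, if_pos t2] at h2
      have he : (padicValInt p (q ^ s - 1) + 1) - padicValInt p (q ^ s - 1) = 1 := by omega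
      rw [he, pow_one] at h2
      nlinarith [h1, h2, hspos, hp2]
    · -- both non-torsion
      have hk1 := one_le_k (p := p) t1
      rw [← hsdef] at hk1
      have hk'1 := one_le_k (p := p) t2
      rw [← hs'def] at hk'1
      have h1 := h 1
      rw [F 1 one_ne_zero, F' 1 one_ne_zero, if_neg t1, if_neg t2,
        Nat.sub_eq_zero_of_le hk1, Nat.sub_eq_zero_of_le hk'1, pow_zero,
        mul_one, mul_one] at h1
      refine ⟨h1, ?_⟩
      have h2 := h (padicValInt p (q ^ s - 1) + padicValInt p (q' ^ s' - 1))
      rw [F _ (by omega), F' _ (by omega), if_neg t1, if_neg t2] at h2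
      have he1 : (padicValInt p (q ^ s - 1) + padicValInt p (q' ^ s' - 1)) -
          padicValInt p (q ^ s - 1) = padicValInt p (q' ^ s' - 1) := by omega
      have he2 : (padicValInt p (q ^ s - 1) + padicValInt p (q' ^ s' - 1)) -
          padicValInt p (q' ^ s' - 1) = padicValInt p (q ^ s - 1) := by omega
      rw [he1, he2] at h2
      set a := padicValInt p (q ^ s - 1) with hadef
      set b := padicValInt p (q' ^ s' - 1) with hbdef
      rw [h1] at h2
      have h3 : p ^ b = p ^ a := Nat.eq_of_mul_eq_mul_left hs'pos h2
      exact (Nat.pow_right_injective hp2 h3).symm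
  · rintro ⟨hs, hv⟩ n
    rcases Nat.eq_zero_or_pos n with rfl | hn
    · haveI : NeZero (p^0) := ⟨one_ne_zero⟩
      have hcard : Fintype.card (ZMod (p^0)) = 1 := by rw [ZMod.card, pow_zero]
      haveI := Fintype.card_le_one_iff_subsingleton.mp hcard.le
      rw [Subsingleton.elim ((q : ZMod (p^0))) ((q' : ZMod (p^0)))]
    · rw [F n hn.ne', F' n hn.ne']
      by_cases t1 : q ^ s = 1 <;> by_cases t2 : q' ^ s' = 1
      · rw [if_pos t1, if_pos t2, hs]
      · exfalso
        have hk'1 := one_le_k (p := p) t2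
        rw [← hs'def] at hk'1
        rw [t1, sub_self, padicValInt.zero] at hv
        omega
      · exfalso
        have hk1 := one_le_k (p := p) t1
        rw [← hsdef] at hk1
        rw [t2, sub_self, padicValInt.zero] at hv
        omega
      · rw [if_neg t1, if_neg t2, hv, hs]
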